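/- (Point-to-plane distance (4.5), vertex A₂ to the face with pole b²) Assume B < 0, so a₂₂ < 0, and let b² = −cos(π/v)·a₁ + a₂ − cos(π/w)·a₃. Then ⟨a₂, b²⟩ = 1 and ⟨b², b²⟩ = 1, the perpendicular foot of A₂ on this plane is y = a₂ − b², and −⟨a₂, y⟩/√(⟨a₂,a₂⟩·⟨y,y⟩) = √(1 − 1/a₂₂). (This quantity is cosh of the hyperbolic distance from the vertex A₂ to its opposite face plane of W_{uvw}.) -/

import Mathlib

open Real Matrix

/-- The Coxeter–Schläfli matrix of the complete orthoscheme `W_{uvw}`. -/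
noncomputable def CSmatrix (u v w : ℝ) : Matrix (Fin 4) (Fin 4) ℝ :=
  !![1, -cos (π/u), 0, 0;
     -cos (π/u), 1, -cos (π/v), 0;
     0, -cos (π/v), 1, -cos (π/w);
     0, 0, -cos (π/w), 1]

/-- The inverse of the Coxeter–Schläfli matrix; its entries are the `a_{ij}`. -/
noncomputable def CSinv (u v w : ℝ) : Matrix (Fin 4) (Fin 4) ℝ :=
  (CSmatrix u v w)⁻¹

theorem stmt12 (u v w : ℝ) (hu : 3 ≤ u) (hv : 3 ≤ v) (hw : 3 ≤ w)
    (hdet : (CSmatrix u v w).det ≠ 0)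
    {V : Type*} [AddCommGroup V] [Module ℝ V]
    (Bf : LinearMap.BilinForm ℝ V)
    (hsymm : ∀ x y : V, Bf x y = Bf y x)
    (a : Fin 4 → V)
    (hGram : ∀ i j : Fin 4, Bf (a i) (a j) = CSinv u v w i j)
    (hBneg : (CSmatrix u v w).det < 0)
    (b2 : V) (hb2 : b2 = (-cos (π/v)) • a 1 + a 2 - cos (π/w) • a 3) :
    CSinv u v w 2 2 < 0 ∧
    Bf (a 2) b2 = 1 ∧ Bf b2 b2 = 1 ∧
    a 2 - (Bf (a 2) b2 / Bf b2 b2) • b2 = a 2 - b2 ∧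
    -Bf (a 2) (a 2 - b2) / Real.sqrt (Bf (a 2) (a 2) * Bf (a 2 - b2) (a 2 - b2)) =
      Real.sqrt (1 - 1 / CSinv u v w 2 2) := by
  have hupos : (0:ℝ) < u := by linarith
  have hM : (CSmatrix u v w)⁻¹ * CSmatrix u v w = 1 :=
    Matrix.nonsing_inv_mul _ (isUnit_iff_ne_zero.mpr hdet)
  -- Bf (a i) b2 = (1 : Matrix) i 2
  have key : ∀ i : Fin 4, Bf (a i) b2 = (1 : Matrix (Fin 4) (Fin 4) ℝ) i 2 := by
    intro i
    have h := congrArg (fun m : Matrix (Fin 4) (Fin 4) ℝ => m i 2) hM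
    simp only [Matrix.mul_apply, Fin.sum_univ_four] at h
    rw [hb2]
    simp only [map_add, map_sub, _root_.map_smul, LinearMap.smul_apply, smul_eq_mul, hGram]
    simp only [CSinv, CSmatrix]
    simp [CSmatrix] at h
    linarith [h]
  have h1 : Bf (a 2) b2 = 1 := by
    have := key 2; simpa using this
  have h0 : Bf (a 1) b2 = 0 := by
    have := key 1; simpa using this
  have h3 : Bf (a 3) b2 = 0 := by
    have := key 3; simpa using this
  have hbb : Bf b2 b2 = 1 := by
    nth_rewrite 1 [hb2]
    simp only [map_add, map_sub, _root_.map_smul, LinearMap.add_apply, LinearMap.sub_apply,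
      LinearMap.smul_apply, smul_eq_mul]
    rw [h0, h1, h3]; ring
  -- a22 < 0
  set s : ℝ := CSinv u v w 2 2 with hs_def
  have hple : π/u ≤ π/3 := div_le_div_of_nonneg_left Real.pi_pos.le (by norm_num) hu
  have hcu0 : 0 ≤ cos (π/u) := by
    apply Real.cos_nonneg_of_mem_Icc
    constructor
    · have : (0:ℝ) < π/u := by positivity
      linarith [Real.pi_pos]
    · linarith [Real.pi_pos]
  have hcu1 : cos (π/u) < 1 := by
    have := Real.cos_lt_cos_of_nonneg_of_le_pi (x := 0) (y := π/u) le_rfl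
      (by linarith [Real.pi_pos]) (by positivity)
    simpa using this
  have hadj : (CSmatrix u v w).adjugate 2 2 = 1 - cos (π/u) ^ 2 := by
    rw [Matrix.adjugate_apply]
    simp [Matrix.det_succ_row_zero, Fin.sum_univ_succ, CSmatrix, Matrix.updateRow_apply,
      Fin.ext_iff, Pi.single_apply, Fin.succAbove]
    ring
  have hsval : s = ((CSmatrix u v w).det)⁻¹ * (1 - cos (π/u) ^ 2) := by
    rw [hs_def, CSinv, Matrix.inv_def]
    simp [hadj, Ring.inverse_eq_inv']
  have hspos : 0 < 1 - cos (π/u) ^ 2 := by nlinarith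
  have hs : s < 0 := by
    rw [hsval]
    exact mul_neg_of_neg_of_pos (inv_lt_zero.mpr hBneg) hspos
  refine ⟨hs, h1, hbb, ?_, ?_⟩
  · rw [h1, hbb]; norm_num
  · have e1 : Bf (a 2) (a 2 - b2) = s - 1 := by
      rw [map_sub, h1, hGram 2 2, hs_def]
    have e2 : Bf (a 2) (a 2) = s := hGram 2 2
    have e3 : Bf (a 2 - b2) (a 2 - b2) = s - 1 := by
      have hsym1 : Bf b2 (a 2) = 1 := by rw [hsymm]; exact h1
      simp only [map_sub, LinearMap.sub_apply]
      rw [hGram 2 2, h1, hsym1, hbb]; ring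
    rw [e1, e2, e3]
    have hs1 : s - 1 < 0 := by linarith
    have hprod : 0 < s * (s - 1) := mul_pos_of_neg_of_neg hs hs1
    have hsne : s ≠ 0 := hs.ne
    have h1s : (1:ℝ) - 1/s = (1 - s)^2 / (s * (s - 1)) := by
      have hs1' : s - 1 ≠ 0 := hs1.ne
      field_simp; ring
    rw [h1s, Real.sqrt_div (sq_nonneg _), Real.sqrt_sq (by linarith : (0:ℝ) ≤ 1 - s)]
    rw [neg_sub]
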